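/- Let (X, μ) be a standard Borel probability space with μ atomless, let m ≥ 1 be an integer, and let H = L²(X, μ; ℂ^m). Let (ξ_n)_{n∈ℕ} be a Hilbert (orthonormal) basis of H and choose for each n a measurable representative f_n : X → ℂ^m of ξ_n. Define, for x ∈ X, the infinite matrix γ(x) with entries γ_{n,k}(x) = ⟨f_n(x), f_k(x)⟩ (inner product in ℂ^m). Then there exists a μ-null set E ⊆ X such that for all x, y ∈ X \ E and every real number c > 0, if γ_{n,k}(x) = c·γ_{n,k}(y) for all n, k ∈ ℕ, then x = y. In particular, the map x ↦ γ(x) is injective outside a null set, even after moding out by the scaling action of the positive reals. -/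

import Mathlib

noncomputable section

open MeasureTheory
open scoped ComplexInnerProductSpace

private lemma lp_coeFn_sum_range {α E : Type*} [MeasurableSpace α] {μ : Measure α}
    [NormedAddCommGroup E] (g : ℕ → Lp E 2 μ) (j : ℕ) :
    (↑(∑ n ∈ Finset.range j, g n) : α → E) =ᵐ[μ] fun x => ∑ n ∈ Finset.range j, g n x := by
  induction j with
  | zero => simp only [Finset.sum_range_zero]; exact Lp.coeFn_zero E 2 μ
  | succ j ih =>
    simp only [Finset.sum_range_succ]
    filter_upwards [Lp.coeFn_add (∑ n ∈ Finset.range j, g n) (g j), ih] with x h1 h2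
    rw [h1, Pi.add_apply, h2]

/-- **Lemma 3.4.** Let `(X, μ)` be an atomless standard Borel probability space,
`H = L²(X, μ; ℂᵐ)`, `(ξ n)` a Hilbert basis of `H` with measurable representatives
`f n`. Then the matrix-valued map `x ↦ (⟪f n x, f k x⟫)_{n,k}` is injective outside a
`μ`-null set, even after moding out by the scaling action of the positive reals. -/
theorem stmt9 {X : Type} [MeasurableSpace X] [StandardBorelSpace X]
    (μ : Measure X) [IsProbabilityMeasure μ] [NullSingletonClass μ]
    {m : ℕ} (hm : 0 < m)
    (ξ : HilbertBasis ℕ ℂ (Lp (EuclideanSpace ℂ (Fin m)) 2 μ))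
    (f : ℕ → X → EuclideanSpace ℂ (Fin m))
    (hmeas : ∀ n, StronglyMeasurable (f n))
    (hrepr : ∀ n, (ξ n : X → EuclideanSpace ℂ (Fin m)) =ᵐ[μ] f n) :
    ∃ E : Set X, μ E = 0 ∧
      ∀ x ∉ E, ∀ y ∉ E, ∀ c : ℝ, 0 < c →
        (∀ n k : ℕ, ⟪f n x, f k x⟫ = (c : ℂ) * ⟪f n y, f k y⟫) → x = y := by
  classical
  obtain ⟨A, hAm, hAsep⟩ :=
    exists_seq_separating X (MeasurableSet.univ (α := X)) Set.univ
  set e1 : EuclideanSpace ℂ (Fin m) := EuclideanSpace.single ⟨0, hm⟩ 1 with he1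
  have he1norm : (⟪e1, e1⟫ : ℂ) = 1 := by
    simp [he1, EuclideanSpace.inner_single_left]
  have key : ∀ i : ℕ, ∃ N : Set X, μ N = 0 ∧ ∀ x ∉ N, ∀ y ∉ N, ∀ c : ℝ, 0 < c →
      (∀ n k : ℕ, ⟪f n x, f k x⟫ = (c : ℂ) * ⟪f n y, f k y⟫) → (x ∈ A i ↔ y ∈ A i) := by
    intro i
    set g : Lp (EuclideanSpace ℂ (Fin m)) 2 μ :=
      indicatorConstLp 2 (hAm i) (measure_ne_top μ (A i)) e1 with hg
    set co : ℕ → ℂ := fun n => ξ.repr g n with hco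
    set S : ℕ → Lp (EuclideanSpace ℂ (Fin m)) 2 μ :=
      fun j => ∑ n ∈ Finset.range j, co n • ξ n with hSdef
    have hS : Filter.Tendsto S Filter.atTop (nhds g) := (ξ.hasSum_repr g).tendsto_sum_nat
    have htm : TendstoInMeasure μ (fun j => (S j : X → EuclideanSpace ℂ (Fin m)))
        Filter.atTop g := tendstoInMeasure_of_tendsto_Lp hS
    obtain ⟨ns, -, hns⟩ := htm.exists_seq_tendsto_ae
    have hScoe : ∀ j, (↑(S j) : X → EuclideanSpace ℂ (Fin m)) =ᵐ[μ]
        fun x => ∑ n ∈ Finset.range j, co n • f n x := by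
      intro j
      refine (lp_coeFn_sum_range (fun n => co n • ξ n) j).trans ?_
      have h1 : ∀ n, (↑(co n • ξ n) : X → EuclideanSpace ℂ (Fin m)) =ᵐ[μ]
          fun x => co n • f n x := by
        intro n
        filter_upwards [Lp.coeFn_smul (co n) (ξ n), hrepr n] with x h1 h2
        simp [h1, h2]
      filter_upwards [ae_all_iff.2 h1] with x hx
      exact Finset.sum_congr rfl fun n _ => hx n
    have hgood : ∀ᵐ x ∂μ, Filter.Tendsto
        (fun l => ∑ n ∈ Finset.range (ns l), co n • f n x) Filter.atTop
        (nhds ((A i).indicator (fun _ => e1) x)) := by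
      filter_upwards [hns, indicatorConstLp_coeFn (p := 2) (hs := hAm i)
        (hμs := measure_ne_top μ (A i)) (c := e1), ae_all_iff.2 hScoe] with x h1 h2 h3
      rw [h2] at h1
      exact h1.congr fun l => h3 (ns l)
    refine ⟨{x | ¬ Filter.Tendsto (fun l => ∑ n ∈ Finset.range (ns l), co n • f n x)
        Filter.atTop (nhds ((A i).indicator (fun _ => e1) x))}, hgood, ?_⟩
    intro x hx y hy c hc hxy
    simp only [Set.mem_setOf_eq, not_not] at hx hy
    have expand : ∀ (z : X) (l : ℕ),
        (⟪∑ n ∈ Finset.range (ns l), co n • f n z, ∑ k ∈ Finset.range (ns l), co k • f k z⟫ : ℂ)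
        = ∑ n ∈ Finset.range (ns l), ∑ k ∈ Finset.range (ns l),
            (starRingEnd ℂ) (co n) * (co k * ⟪f n z, f k z⟫) := by
      intro z l
      rw [sum_inner]
      refine Finset.sum_congr rfl fun n _ => ?_
      rw [inner_smul_left, inner_sum, Finset.mul_sum]
      refine Finset.sum_congr rfl fun k _ => ?_
      rw [inner_smul_right]
    have heq : ∀ l : ℕ,
        (⟪∑ n ∈ Finset.range (ns l), co n • f n x, ∑ k ∈ Finset.range (ns l), co k • f k x⟫ : ℂ)
        = (c : ℂ) * ⟪∑ n ∈ Finset.range (ns l), co n • f n y,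
            ∑ k ∈ Finset.range (ns l), co k • f k y⟫ := by
      intro l
      rw [expand x l, expand y l, Finset.mul_sum]
      refine Finset.sum_congr rfl fun n _ => ?_
      rw [Finset.mul_sum]
      refine Finset.sum_congr rfl fun k _ => ?_
      rw [hxy n k]
      ring
    have hxlim : Filter.Tendsto
        (fun l => (⟪∑ n ∈ Finset.range (ns l), co n • f n x,
          ∑ k ∈ Finset.range (ns l), co k • f k x⟫ : ℂ)) Filter.atTop
        (nhds ⟪(A i).indicator (fun _ => e1) x, (A i).indicator (fun _ => e1) x⟫) :=
      hx.inner hx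
    have hylim : Filter.Tendsto
        (fun l => (c : ℂ) * (⟪∑ n ∈ Finset.range (ns l), co n • f n y,
          ∑ k ∈ Finset.range (ns l), co k • f k y⟫ : ℂ)) Filter.atTop
        (nhds ((c : ℂ) * ⟪(A i).indicator (fun _ => e1) y, (A i).indicator (fun _ => e1) y⟫)) :=
      (hy.inner hy).const_mul _
    have hmain : (⟪(A i).indicator (fun _ => e1) x, (A i).indicator (fun _ => e1) x⟫ : ℂ)
        = (c : ℂ) * ⟪(A i).indicator (fun _ => e1) y, (A i).indicator (fun _ => e1) y⟫ :=
      tendsto_nhds_unique hxlim ((hylim.congr (fun l => (heq l).symm)))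
    have hval : ∀ z : X, (⟪(A i).indicator (fun _ => e1) z, (A i).indicator (fun _ => e1) z⟫ : ℂ)
        = if z ∈ A i then 1 else 0 := by
      intro z
      by_cases hz : z ∈ A i
      · simp only [Set.indicator_of_mem hz, he1norm, if_pos hz]
      · simp [Set.indicator_of_notMem hz, hz]
    rw [hval x, hval y] at hmain
    constructor
    · intro hxA
      by_contra hyA
      rw [if_pos hxA, if_neg hyA, mul_zero] at hmain
      exact one_ne_zero hmain
    · intro hyA
      by_contra hxA
      rw [if_neg hxA, if_pos hyA, mul_one] at hmain
      have : (c : ℂ) = 0 := hmain.symm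
      exact_mod_cast absurd this (by exact_mod_cast hc.ne')
  choose N hN0 hNsep using key
  refine ⟨⋃ i, N i, measure_iUnion_null hN0, ?_⟩
  intro x hx y hy c hc hxy
  simp only [Set.mem_iUnion, not_exists] at hx hy
  exact hAsep x (Set.mem_univ x) y (Set.mem_univ y)
    (fun i => hNsep i x (hx i) y (hy i) c hc hxy)
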